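/- Let z0 lie in the upper half-plane H. Then V_𝓗(z0) = {f(z0) : f ∈ 𝓗} equals {w ∈ H : Im(w) > Im(z0)} ∪ {z0}; in particular, every f ∈ 𝓗 satisfies Im(f(z0)) ≥ Im(z0), with equality if and only if f is the identity. -/

import Mathlib

open Complex Set Filter Topology

noncomputable section

/-- The upper half-plane. -/
def UHP : Set ℂ := {z : ℂ | 0 < z.im}

/-- Hydrodynamic normalization at infinity: there is `c ≥ 0` (the half-plane capacity)
such that `z * (f z - z) → -c` as `|z| → ∞` within each sector `{Im z ≥ ε * |z|}`. -/
def HydroNorm (f : ℂ → ℂ) : Prop :=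
  ∃ c : ℝ, 0 ≤ c ∧ ∀ ε : ℝ, 0 < ε →
    Tendsto (fun z : ℂ => z * (f z - z))
      (comap (fun z : ℂ => ‖z‖) atTop ⊓ 𝓟 {z : ℂ | ε * ‖z‖ ≤ z.im})
      (𝓝 (-(c : ℂ)))

/-- The class `𝓗` of univalent self-maps of the upper half-plane with
hydrodynamic normalization. -/
def ClassH (f : ℂ → ℂ) : Prop :=
  DifferentiableOn ℂ f UHP ∧ InjOn f UHP ∧ MapsTo f UHP UHP ∧ HydroNorm f


/-- The value range `V_𝓗(z0)`. -/
def VH (z0 : ℂ) : Set ℂ := {w : ℂ | ∃ f : ℂ → ℂ, ClassH f ∧ f z0 = w}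

section Aux
open Real

lemma sq_csqrt (w : ℂ) : (w ^ (2⁻¹ : ℂ)) ^ 2 = w := by
  have := Complex.cpow_nat_inv_pow w (n := 2) (by norm_num)
  push_cast at this
  simpa using this

lemma re_csqrt_pos {w : ℂ} (hw : w ∈ slitPlane) : 0 < (w ^ (2⁻¹ : ℂ)).re := by
  have hw0 : w ≠ 0 := slitPlane_ne_zero hw
  rw [Complex.cpow_def_of_ne_zero hw0, Complex.exp_re]
  have harg : w.arg ≤ π := (abs_le.mp (Complex.abs_arg_le_pi w)).2
  have harg' : w.arg ≠ π := Complex.slitPlane_arg_ne_pi hw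
  have hargl : -π < w.arg := Complex.neg_pi_lt_arg w
  have him : (Complex.log w * 2⁻¹).im = w.arg / 2 := by
    simp [Complex.mul_im, Complex.log_im]; ring
  rw [him]
  have hpi : (0:ℝ) < π := Real.pi_pos
  have hcos : Real.cos (w.arg / 2) > 0 := by
    apply Real.cos_pos_of_mem_Ioo
    constructor <;> [skip; skip]
    · linarith
    · have := lt_of_le_of_ne harg harg'; linarith
  positivity

lemma csqrt_eq {w v : ℂ} (hw : w ∈ slitPlane) (hv2 : v ^ 2 = w) (hvre : 0 < v.re) :
    w ^ (2⁻¹ : ℂ) = v := by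
  have hsq : (w ^ (2⁻¹ : ℂ)) ^ 2 = w := sq_csqrt w
  have h : (w ^ (2⁻¹ : ℂ) - v) * (w ^ (2⁻¹ : ℂ) + v) = 0 := by
    linear_combination hsq - hv2
  rcases mul_eq_zero.mp h with h | h
  · exact sub_eq_zero.mp h
  · exfalso
    have hre := re_csqrt_pos hw
    have : (w ^ (2⁻¹ : ℂ)).re = -v.re := by
      have : w ^ (2⁻¹ : ℂ) = -v := by linear_combination h
      rw [this, Complex.neg_re]
    linarith [this ▸ hre]


lemma normSq_sub_conj (u q : ℂ) :
    normSq (u - (starRingEnd ℂ) q) = normSq (u - q) + 4 * u.im * q.im := by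
  simp [Complex.normSq_apply, Complex.sub_re, Complex.sub_im, Complex.conj_re, Complex.conj_im]
  ring

lemma sub_conj_ne_zero {u q : ℂ} (hu : 0 < u.im) (hq : 0 < q.im) :
    u - (starRingEnd ℂ) q ≠ 0 := by
  intro h
  have : (u - (starRingEnd ℂ) q).im = 0 := by rw [h]; simp
  simp [Complex.sub_im, Complex.conj_im] at this
  linarith

lemma abs_lt_abs_conj {u q : ℂ} (hu : 0 < u.im) (hq : 0 < q.im) :
    ‖u - q‖ < ‖u - (starRingEnd ℂ) q‖ := by
  have h := normSq_sub_conj u q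
  have h2 : normSq (u - q) < normSq (u - (starRingEnd ℂ) q) := by nlinarith
  have := Complex.sq_norm (u - q)
  have := Complex.sq_norm (u - (starRingEnd ℂ) q)
  nlinarith [norm_nonneg (u - q), norm_nonneg (u - (starRingEnd ℂ) q)]

lemma isOpen_UHP : IsOpen UHP := isOpen_lt continuous_const Complex.continuous_im

lemma schwarz_pick {f : ℂ → ℂ} (hd : DifferentiableOn ℂ f UHP) (hm : MapsTo f UHP UHP)
    {z a : ℂ} (hz : z ∈ UHP) (ha : a ∈ UHP) :
    z.im * a.im * normSq (f z - f a) ≤ (f z).im * (f a).im * normSq (z - a) := by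
  set b := f a with hb_def
  have hb : b ∈ UHP := hm ha
  have hfz : f z ∈ UHP := hm hz
  -- the inverse Cayley-type map P : disk → UHP
  set P : ℂ → ℂ := fun ζ => (a - (starRingEnd ℂ) a * ζ) / (1 - ζ) with hP_def
  have hPim : ∀ ζ : ℂ, ζ ∈ Metric.ball (0:ℂ) 1 → (P ζ).im =
      a.im * (1 - normSq ζ) / normSq (1 - ζ) := by
    intro ζ hζ
    have key : (a - (starRingEnd ℂ) a * ζ).im * (1-ζ).re - (a - (starRingEnd ℂ) a * ζ).re * (1-ζ).im
        = a.im * (1 - normSq ζ) := by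
      simp [Complex.normSq_apply, Complex.sub_re, Complex.sub_im, Complex.mul_re, Complex.mul_im,
        Complex.conj_re, Complex.conj_im, Complex.one_re, Complex.one_im]
      ring
    rw [hP_def]
    simp only [Complex.div_im]
    rw [div_sub_div_same, key]
  have hone : ∀ ζ : ℂ, ζ ∈ Metric.ball (0:ℂ) 1 → (1:ℂ) - ζ ≠ 0 := by
    intro ζ hζ h
    have : ζ = 1 := by linear_combination -h
    rw [this] at hζ; simp at hζ
  have hP_maps : MapsTo P (Metric.ball (0:ℂ) 1) UHP := by
    intro ζ hζ
    have h1 : normSq ζ < 1 := by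
      have := Metric.mem_ball.mp hζ
      rw [dist_zero_right] at this
      have := Complex.sq_norm ζ
      nlinarith [norm_nonneg ζ]
    have h2 : 0 < normSq (1 - ζ) := normSq_pos.mpr (hone ζ hζ)
    have := hPim ζ hζ
    show 0 < (P ζ).im
    rw [this]
    exact div_pos (by nlinarith [ha.out]) h2
  have hP_diff : DifferentiableOn ℂ P (Metric.ball (0:ℂ) 1) := by
    apply DifferentiableOn.div
    · exact (differentiable_const _).differentiableOn.sub
        ((differentiable_id.const_mul _).differentiableOn)
    · exact (differentiable_const _).differentiableOn.sub differentiable_id.differentiableOn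
    · exact hone
  -- the map g : disk → disk
  set g : ℂ → ℂ := fun ζ => (f (P ζ) - b) / (f (P ζ) - (starRingEnd ℂ) b) with hg_def
  have hfP : ∀ ζ ∈ Metric.ball (0:ℂ) 1, f (P ζ) ∈ UHP := fun ζ hζ => hm (hP_maps hζ)
  have hg_diff : DifferentiableOn ℂ g (Metric.ball (0:ℂ) 1) := by
    have hfPd : DifferentiableOn ℂ (fun ζ => f (P ζ)) (Metric.ball (0:ℂ) 1) :=
      hd.comp hP_diff hP_maps
    apply DifferentiableOn.div (hfPd.sub (differentiable_const _).differentiableOn)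
      (hfPd.sub (differentiable_const _).differentiableOn)
    intro ζ hζ
    exact sub_conj_ne_zero (hfP ζ hζ).out hb.out
  have hg_maps : MapsTo g (Metric.ball (0:ℂ) 1) (Metric.ball (0:ℂ) 1) := by
    intro ζ hζ
    rw [Metric.mem_ball, dist_zero_right, hg_def]
    simp only [norm_div]
    rw [div_lt_one ((norm_nonneg _).trans_lt (abs_lt_abs_conj (hfP ζ hζ).out hb.out))]
    exact abs_lt_abs_conj (hfP ζ hζ).out hb.out
  have hP0 : P 0 = a := by rw [hP_def]; simp
  have hg0 : g 0 = 0 := by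
    rw [hg_def]; simp only; rw [hP0, ← hb_def]
    simp
  -- apply Schwarz at ζ0
  set ζ0 : ℂ := (z - a) / (z - (starRingEnd ℂ) a) with hζ0_def
  have hζ0 : ‖ζ0‖ < 1 := by
    rw [hζ0_def, norm_div]
    rw [div_lt_one ((norm_nonneg _).trans_lt (abs_lt_abs_conj hz.out ha.out))]
    exact abs_lt_abs_conj hz.out ha.out
  have hmem : ζ0 ∈ Metric.ball (0:ℂ) 1 := by
    rw [Metric.mem_ball, dist_zero_right]; exact hζ0
  have hPζ0 : P ζ0 = z := by
    rw [hP_def, hζ0_def]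
    have h1 : z - (starRingEnd ℂ) a ≠ 0 := sub_conj_ne_zero hz.out ha.out
    have h2 : a - (starRingEnd ℂ) a ≠ 0 := by
      intro h
      have : (a - (starRingEnd ℂ) a).im = 0 := by rw [h]; simp
      simp [Complex.sub_im, Complex.conj_im] at this
      have := ha.out; linarith
    field_simp
    linear_combination z * mul_inv_cancel₀ h2
  have hsch := Complex.norm_le_norm_of_mapsTo_ball hg_diff (hg_maps.mono_right Metric.ball_subset_closedBall) hg0 hζ0
  rw [hg_def] at hsch
  simp only at hsch
  rw [hPζ0, hζ0_def] at hsch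
  -- now unpack
  have hd1 : (0:ℝ) < ‖f z - (starRingEnd ℂ) b‖ :=
    (norm_nonneg _).trans_lt (abs_lt_abs_conj hfz.out hb.out)
  have hd2 : (0:ℝ) < ‖z - (starRingEnd ℂ) a‖ :=
    (norm_nonneg _).trans_lt (abs_lt_abs_conj hz.out ha.out)
  rw [norm_div, norm_div, div_le_div_iff₀ hd1 hd2] at hsch
  have hsq : normSq (f z - b) * normSq (z - (starRingEnd ℂ) a)
      ≤ normSq (z - a) * normSq (f z - (starRingEnd ℂ) b) := by
    have h1 := Complex.sq_norm (f z - b)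
    have h2 := Complex.sq_norm (z - (starRingEnd ℂ) a)
    have h3 := Complex.sq_norm (z - a)
    have h4 := Complex.sq_norm (f z - (starRingEnd ℂ) b)
    have hsq2 := mul_le_mul hsch hsch
      (mul_nonneg (norm_nonneg _) (norm_nonneg _))
      (mul_nonneg (norm_nonneg _) (norm_nonneg _))
    nlinarith [hsq2]
  rw [normSq_sub_conj z a, normSq_sub_conj (f z) b] at hsq
  nlinarith [hsq]


lemma tendsto_path_vertical : Tendsto (fun y : ℝ => Complex.I * (y:ℂ)) atTop
    (comap (fun z : ℂ => ‖z‖) atTop ⊓ 𝓟 {z : ℂ | 1 * ‖z‖ ≤ z.im}) := by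
  rw [tendsto_inf]
  constructor
  · rw [tendsto_comap_iff]
    apply Tendsto.congr' (f₁ := fun y : ℝ => y)
    · filter_upwards [eventually_ge_atTop (0:ℝ)] with y hy
      simp [Function.comp, Complex.norm_real, Real.norm_eq_abs, _root_.abs_of_nonneg hy]
    · exact tendsto_id
  · rw [tendsto_principal]
    filter_upwards [eventually_ge_atTop (0:ℝ)] with y hy
    simp [Complex.norm_real, Real.norm_eq_abs, _root_.abs_of_nonneg hy]

lemma cinv_tendsto : Tendsto (fun y : ℝ => ((y:ℂ))⁻¹) atTop (𝓝 0) := by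
  have h : Tendsto (fun y : ℝ => ((y⁻¹ : ℝ) : ℂ)) atTop (𝓝 ((0:ℝ):ℂ)) :=
    (Complex.continuous_ofReal.tendsto _).comp tendsto_inv_atTop_zero
  simpa using h.congr (fun y => by push_cast; ring)

lemma hydro_drift {f : ℂ → ℂ} (hh : HydroNorm f) :
    Tendsto (fun y : ℝ => f (Complex.I * y) - Complex.I * y) atTop (𝓝 0) := by
  obtain ⟨c, hc, ht⟩ := hh
  have h1 := (ht 1 one_pos).comp tendsto_path_vertical
  have hIinv : Tendsto (fun y : ℝ => (Complex.I * (y:ℂ))⁻¹) atTop (𝓝 0) := by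
    have := cinv_tendsto.const_mul (Complex.I)⁻¹
    rw [mul_zero] at this
    exact this.congr (fun y => by rw [mul_inv])
  have h2 := h1.mul hIinv
  rw [mul_zero] at h2
  apply h2.congr'
  filter_upwards [eventually_gt_atTop (0:ℝ)] with y hy
  have hne : Complex.I * (y:ℂ) ≠ 0 := by
    simp [Complex.I_ne_zero, Complex.ofReal_ne_zero, ne_of_gt hy]
  simp only [Function.comp_apply]
  rw [mul_comm, ← mul_assoc, inv_mul_cancel₀ hne, one_mul]

lemma im_le_im_classH {f : ℂ → ℂ} (hd : DifferentiableOn ℂ f UHP) (hm : MapsTo f UHP UHP)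
    (hh : HydroNorm f) {z : ℂ} (hz : z ∈ UHP) : z.im ≤ (f z).im := by
  have hδ := hydro_drift hh
  set δ : ℝ → ℂ := fun y => f (Complex.I * y) - Complex.I * y with hδ_def
  -- limits
  have L1 : Tendsto (fun y : ℝ => (f z - f (Complex.I * y)) / (y:ℂ)) atTop (𝓝 (-Complex.I)) := by
    have h1 : Tendsto (fun y : ℝ => f z * ((y:ℂ))⁻¹ - δ y * ((y:ℂ))⁻¹ - Complex.I) atTop
        (𝓝 (-Complex.I)) := by
      have := ((cinv_tendsto.const_mul (f z)).sub (hδ.mul cinv_tendsto)).sub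
        (tendsto_const_nhds (x := Complex.I))
      simpa using this
    apply h1.congr'
    filter_upwards [eventually_gt_atTop (0:ℝ)] with y hy
    have hy0 : ((y:ℂ)) ≠ 0 := Complex.ofReal_ne_zero.mpr (ne_of_gt hy)
    rw [hδ_def]
    field_simp
    ring
  have L3 : Tendsto (fun y : ℝ => (z - Complex.I * y) / (y:ℂ)) atTop (𝓝 (-Complex.I)) := by
    have h1 : Tendsto (fun y : ℝ => z * ((y:ℂ))⁻¹ - Complex.I) atTop (𝓝 (-Complex.I)) := by
      have := (cinv_tendsto.const_mul z).sub (tendsto_const_nhds (x := Complex.I))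
      simpa using this
    apply h1.congr'
    filter_upwards [eventually_gt_atTop (0:ℝ)] with y hy
    have hy0 : ((y:ℂ)) ≠ 0 := Complex.ofReal_ne_zero.mpr (ne_of_gt hy)
    field_simp
  have L2 : Tendsto (fun y : ℝ => (f (Complex.I * y)).im / y) atTop (𝓝 1) := by
    have him : Tendsto (fun y : ℝ => (δ y).im) atTop (𝓝 0) := by
      have := (Complex.continuous_im.tendsto 0).comp hδ
      simpa [Function.comp_def] using this
    have h1 : Tendsto (fun y : ℝ => (δ y).im * y⁻¹ + 1) atTop (𝓝 1) := by
      have := (him.mul tendsto_inv_atTop_zero).add (tendsto_const_nhds (x := (1:ℝ)))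
      simpa using this
    apply h1.congr'
    filter_upwards [eventually_gt_atTop (0:ℝ)] with y hy
    have : (f (Complex.I * y)).im = (δ y).im + y := by
      rw [hδ_def]; simp
    rw [this]
    field_simp
  -- limits of the two sides
  have hA : Tendsto (fun y : ℝ => z.im * normSq ((f z - f (Complex.I * y)) / (y:ℂ)))
      atTop (𝓝 (z.im)) := by
    have := ((Complex.continuous_normSq.tendsto _).comp L1).const_mul z.im
    simpa using this
  have hB : Tendsto (fun y : ℝ =>
      (f z).im * ((f (Complex.I * y)).im / y) * normSq ((z - Complex.I * y) / (y:ℂ)))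
      atTop (𝓝 ((f z).im)) := by
    have := ((L2.const_mul (f z).im).mul ((Complex.continuous_normSq.tendsto _).comp L3))
    simpa using this
  -- pointwise inequality
  refine le_of_tendsto_of_tendsto hA hB ?_
  filter_upwards [eventually_gt_atTop (0:ℝ)] with y hy
  have hIy : Complex.I * (y:ℂ) ∈ UHP := by
    show 0 < (Complex.I * (y:ℂ)).im
    simp [hy]
  have hsp := schwarz_pick hd hm hz hIy
  have hIyim : (Complex.I * (y:ℂ)).im = y := by simp
  rw [hIyim] at hsp
  have hy2 : (0:ℝ) < y^2 := by positivity
  have hy3 : (0:ℝ) < y^3 := by positivity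
  have hnq : ∀ c : ℂ, normSq (c / (y:ℂ)) = normSq c / y^2 := by
    intro c
    rw [normSq_div, Complex.normSq_ofReal]
    ring_nf
  show z.im * normSq ((f z - f (Complex.I * y)) / (y:ℂ)) ≤ _
  rw [hnq, hnq]
  rw [← mul_le_mul_iff_of_pos_right hy3]
  have e1 : z.im * (normSq (f z - f (Complex.I * ↑y)) / y ^ 2) * y ^ 3
      = (z.im * y * normSq (f z - f (Complex.I * ↑y))) := by
    field_simp
  have e2 : (f z).im * ((f (Complex.I * ↑y)).im / y) * (normSq (z - Complex.I * ↑y) / y ^ 2) * y ^ 3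
      = (f z).im * (f (Complex.I * ↑y)).im * normSq (z - Complex.I * ↑y) := by
    have hy0 : y ≠ 0 := ne_of_gt hy
    field_simp
    try ring
    try exact Or.inl trivial
  rw [e1, e2]
  exact hsp

lemma convex_UHP : Convex ℝ UHP := convex_halfSpace_im_gt 0

lemma rigidity {f : ℂ → ℂ} (hd : DifferentiableOn ℂ f UHP) (hm : MapsTo f UHP UHP)
    (hh : HydroNorm f) {z0 : ℂ} (hz0 : z0 ∈ UHP) (heq : (f z0).im = z0.im) :
    EqOn f id UHP := by
  set F : ℂ → ℂ := fun z => f z - z with hF_def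
  have hFd : DifferentiableOn ℂ F UHP := hd.sub differentiable_id.differentiableOn
  have hFim : ∀ z ∈ UHP, 0 ≤ (F z).im := by
    intro z hz
    have := im_le_im_classH hd hm hh hz
    simp [hF_def, Complex.sub_im]
    linarith
  have hFz0 : (F z0).im = 0 := by simp [hF_def, Complex.sub_im, heq]
  set G : ℂ → ℂ := fun z => Complex.exp (Complex.I * F z) with hG_def
  have hGd : DifferentiableOn ℂ G UHP :=
    ((differentiable_const Complex.I).differentiableOn.mul hFd).cexp
  have hGnorm : ∀ z, ‖G z‖ = Real.exp (-(F z).im) := by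
    intro z
    rw [hG_def]
    simp [Complex.norm_exp, Complex.mul_re, Complex.I_re, Complex.I_im]
  have hmax : IsMaxOn (norm ∘ G) UHP z0 := by
    intro z hz
    simp only [Function.comp, hGnorm]
    apply Real.exp_le_exp.mpr
    have := hFim z hz
    rw [hFz0]
    linarith
  have hGconst := Complex.eqOn_of_isPreconnected_of_isMaxOn_norm
    convex_UHP.isPreconnected isOpen_UHP hGd hz0 hmax
  -- derivative of F vanishes on UHP
  have hderiv : ∀ z ∈ UHP, fderivWithin ℂ F UHP z = 0 := by
    intro z hz
    have hFz : DifferentiableAt ℂ F z := hFd.differentiableAt (isOpen_UHP.mem_nhds hz)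
    have hGdz : HasDerivAt G (Complex.exp (Complex.I * F z) * (Complex.I * deriv F z)) z := by
      exact (hFz.hasDerivAt.const_mul Complex.I).cexp
    have hGloc : G =ᶠ[𝓝 z] fun _ => G z0 := by
      filter_upwards [isOpen_UHP.mem_nhds hz] with w hw
      exact hGconst hw
    have : deriv G z = 0 := by
      rw [hGloc.deriv_eq]
      exact deriv_const _ _
    rw [hGdz.deriv] at this
    have hexp : Complex.exp (Complex.I * F z) ≠ 0 := Complex.exp_ne_zero _
    have hId : Complex.I * deriv F z = 0 := by
      rcases mul_eq_zero.mp this with h | h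
      · exact absurd h hexp
      · exact h
    have hd0 : deriv F z = 0 := by
      rcases mul_eq_zero.mp hId with h | h
      · exact absurd h Complex.I_ne_zero
      · exact h
    rw [fderivWithin_of_isOpen isOpen_UHP hz]
    ext v
    simp [← toSpanSingleton_deriv, hd0]
  -- F is constant
  have hFconst : ∀ z ∈ UHP, F z = F z0 := by
    intro z hz
    have h := convex_UHP.norm_image_sub_le_of_norm_fderivWithin_le hFd
      (C := 0) (fun x hx => by rw [hderiv x hx]; simp) hz0 hz
    rw [zero_mul] at h
    exact sub_eq_zero.mp (norm_le_zero_iff.mp h)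
  -- the constant is 0
  have hdrift := hydro_drift hh
  have hconstseq : ∀ᶠ y : ℝ in atTop, f (Complex.I * y) - Complex.I * y = F z0 := by
    filter_upwards [eventually_gt_atTop (0:ℝ)] with y hy
    exact hFconst (Complex.I * y) (by show 0 < (Complex.I * (y:ℂ)).im; simp [hy])
  have hF0 : F z0 = 0 := by
    have h1 : Tendsto (fun _ : ℝ => F z0) atTop (𝓝 (F z0)) := tendsto_const_nhds
    have h2 : Tendsto (fun _ : ℝ => F z0) atTop (𝓝 (0:ℂ)) := by
      apply hdrift.congr' 
      exact hconstseq
    exact tendsto_nhds_unique h1 h2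
  intro z hz
  have := hFconst z hz
  rw [hF0] at this
  have : f z - z = 0 := this
  simp [sub_eq_zero] at this
  simpa using this

lemma slit_mem {c : ℝ} (hc : 0 ≤ c) {u : ℂ} (hu : 0 < u.im) :
    (c:ℂ) - u^2 ∈ slitPlane := by
  rw [Complex.mem_slitPlane_iff]
  rcases eq_or_ne u.re 0 with h | h
  · left
    have : ((c:ℂ) - u^2).re = c - (u.re*u.re - u.im*u.im) := by
      simp [Complex.sub_re, pow_two, Complex.mul_re]
    rw [this, h]
    nlinarith
  · right
    have : ((c:ℂ) - u^2).im = -(u.re*u.im + u.im*u.re) := by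
      simp [Complex.sub_im, pow_two, Complex.mul_im]
    rw [this]
    intro habs
    have : u.re * u.im = 0 := by linarith [habs]
    rcases mul_eq_zero.mp this with h' | h'
    · exact h h'
    · exact (ne_of_gt hu) h'

def slitMap (r t : ℝ) : ℂ → ℂ := fun z => (r:ℂ) + Complex.I * (((4*t:ℝ):ℂ) - (z - r)^2) ^ (2⁻¹:ℂ)

lemma slitMap_W_mem {r t : ℝ} (ht : 0 ≤ t) {z : ℂ} (hz : 0 < z.im) :
    ((4*t:ℝ):ℂ) - (z - (r:ℂ))^2 ∈ slitPlane :=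
  slit_mem (by linarith) (by simp [Complex.sub_im]; exact hz)

lemma slitMap_im {r t : ℝ} (z : ℂ) :
    (slitMap r t z).im = ((((4*t:ℝ):ℂ) - (z - r)^2) ^ (2⁻¹:ℂ)).re := by
  simp [slitMap, Complex.add_im, Complex.mul_im, Complex.I_re, Complex.I_im]

lemma slitMap_mapsTo {r t : ℝ} (ht : 0 ≤ t) : MapsTo (slitMap r t) UHP UHP := by
  intro z hz
  show 0 < (slitMap r t z).im
  rw [slitMap_im]
  exact re_csqrt_pos (slitMap_W_mem ht hz.out)

lemma slitMap_diff {r t : ℝ} (ht : 0 ≤ t) : DifferentiableOn ℂ (slitMap r t) UHP := by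
  intro z hz
  apply DifferentiableAt.differentiableWithinAt
  apply DifferentiableAt.const_add
  apply DifferentiableAt.const_mul
  apply DifferentiableAt.cpow
  · fun_prop
  · fun_prop
  · exact slitMap_W_mem ht hz.out

lemma slitMap_inj {r t : ℝ} (ht : 0 ≤ t) : InjOn (slitMap r t) UHP := by
  intro z1 hz1 z2 hz2 h
  rw [slitMap, slitMap] at h
  have hs : (((4*t:ℝ):ℂ) - (z1 - r)^2) ^ (2⁻¹:ℂ) = (((4*t:ℝ):ℂ) - (z2 - r)^2) ^ (2⁻¹:ℂ) :=
    mul_left_cancel₀ Complex.I_ne_zero (add_left_cancel h)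
  have hW : ((4*t:ℝ):ℂ) - (z1 - r)^2 = ((4*t:ℝ):ℂ) - (z2 - r)^2 := by
    have h1 := sq_csqrt (((4*t:ℝ):ℂ) - (z1 - r)^2)
    have h2 := sq_csqrt (((4*t:ℝ):ℂ) - (z2 - r)^2)
    rw [← h1, ← h2, hs]
  have hsq : (z1 - z2) * (z1 + z2 - 2*r) = 0 := by linear_combination -hW
  rcases mul_eq_zero.mp hsq with h' | h'
  · exact sub_eq_zero.mp h'
  · exfalso
    have : (z1 + z2 - 2*(r:ℂ)).im = 0 := by rw [h']; simp
    simp [Complex.add_im, Complex.sub_im] at this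
    have := hz1.out; have := hz2.out
    linarith

lemma neg_sq_mem_slitPlane {u : ℂ} (hu : 0 < u.im) : -u^2 ∈ slitPlane := by
  have := slit_mem (le_refl (0:ℝ)) hu
  simpa using this

lemma csqrt_neg_sq {u : ℂ} (hu : 0 < u.im) : (-u^2) ^ (2⁻¹:ℂ) = -Complex.I * u := by
  apply csqrt_eq (neg_sq_mem_slitPlane hu)
  · have : Complex.I^2 = -1 := Complex.I_sq
    linear_combination u^2 * this
  · simp [Complex.mul_re, Complex.I_re, Complex.I_im]
    exact hu

lemma slitMap_value {r t : ℝ} {z0 w : ℂ} (hw : 0 < w.im)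
    (hrel : ((4*t:ℝ):ℂ) - (z0 - r)^2 = -(w - r)^2) : slitMap r t z0 = w := by
  show (r:ℂ) + Complex.I * (((4*t:ℝ):ℂ) - (z0 - r)^2) ^ (2⁻¹:ℂ) = w
  rw [hrel, csqrt_neg_sq (by simp [Complex.sub_im]; exact hw)]
  have : Complex.I^2 = -1 := Complex.I_sq
  linear_combination (r - w) * this

lemma slitMap_hydro {r t : ℝ} (ht : 0 ≤ t) : HydroNorm (slitMap r t) := by
  refine ⟨2*t, by linarith, ?_⟩
  intro ε hε
  set L := comap (fun z : ℂ => ‖z‖) atTop ⊓ 𝓟 {z : ℂ | ε * ‖z‖ ≤ z.im}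
    with hL
  set s : ℂ → ℂ := fun z => (((4*t:ℝ):ℂ) - (z - r)^2) ^ (2⁻¹:ℂ) with hs
  set D : ℂ → ℂ := fun z => Complex.I * s z + (z - r) with hD
  have habs : Tendsto (fun z : ℂ => ‖z‖) L atTop :=
    tendsto_comap.mono_left inf_le_left
  have hsec : ∀ᶠ z in L, ε * ‖z‖ ≤ z.im :=
    (eventually_principal.mpr (fun z hz => hz)).filter_mono inf_le_right
  have hbig : ∀ M : ℝ, ∀ᶠ z in L, M ≤ ‖z‖ := fun M =>
    habs.eventually (eventually_ge_atTop M)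
  have hEv : ∀ᶠ z in L, (0 < z.im ∧ 1 ≤ ‖z‖) ∧ ε * ‖z‖ ≤ z.im := by
    filter_upwards [hsec, hbig 1] with z h1 h2
    exact ⟨⟨lt_of_lt_of_le (by positivity) h1, h2⟩, h1⟩
  -- pointwise facts
  have hfacts : ∀ z : ℂ, (0 < z.im ∧ 1 ≤ ‖z‖) ∧ ε * ‖z‖ ≤ z.im →
      (slitMap r t z - z = -((4*t:ℝ):ℂ) / D z ∧ ε * ‖z‖ ≤ ‖D z‖
        ∧ D z ≠ 0 ∧ z ≠ 0) := by
    rintro z ⟨⟨hzim, hzabs⟩, hzsec⟩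
    have hWs : ((4*t:ℝ):ℂ) - (z - (r:ℂ))^2 ∈ slitPlane := slitMap_W_mem ht hzim
    have hssq : s z ^ 2 = ((4*t:ℝ):ℂ) - (z - r)^2 := sq_csqrt _
    have hsre : 0 < (s z).re := re_csqrt_pos hWs
    have himD : z.im < (D z).im := by
      have : (D z).im = (s z).re + z.im := by
        rw [hD]
        simp [Complex.add_im, Complex.mul_im, Complex.I_re, Complex.I_im, Complex.sub_im]
      rw [this]; linarith
    have hD_ne : D z ≠ 0 := by
      intro h
      rw [h] at himD
      simp at himD
      linarith
    have hz_ne : z ≠ 0 := by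
      intro h
      rw [h] at hzabs
      simp at hzabs
      linarith
    refine ⟨?_, ?_, hD_ne, hz_ne⟩
    · rw [eq_div_iff hD_ne]
      show ((r:ℂ) + Complex.I * s z - z) * (Complex.I * s z + (z - r)) = -((4*t:ℝ):ℂ)
      have hI : Complex.I^2 = -1 := Complex.I_sq
      linear_combination (s z)^2 * hI - hssq
    · calc ε * ‖z‖ ≤ z.im := hzsec
        _ ≤ (D z).im := le_of_lt himD
        _ ≤ |(D z).im| := le_abs_self _
        _ ≤ ‖D z‖ := Complex.abs_im_le_norm _
  -- limits
  have hinv : Tendsto (fun z : ℂ => z⁻¹) L (𝓝 0) := by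
    rw [tendsto_zero_iff_norm_tendsto_zero]
    have := habs.inv_tendsto_atTop
    apply this.congr
    intro z
    simp
  have hru : Tendsto (fun z : ℂ => (z - r)/z) L (𝓝 1) := by
    have h1 : Tendsto (fun z : ℂ => 1 - (r:ℂ) * z⁻¹) L (𝓝 1) := by
      have := (hinv.const_mul (r:ℂ)).const_sub 1
      simpa using this
    apply h1.congr'
    filter_upwards [hEv] with z hz
    have hz_ne : z ≠ 0 := (hfacts z hz).2.2.2
    field_simp
  have hvu0 : Tendsto (fun z : ℂ => (Complex.I * s z - (z - r))/z) L (𝓝 0) := by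
    apply squeeze_zero_norm' (a := fun z : ℂ => (4*t/ε) * ((‖z‖)^2)⁻¹)
    · filter_upwards [hEv] with z hz
      obtain ⟨hkey, hDabs, hD_ne, hz_ne⟩ := hfacts z hz
      have habsz : (0:ℝ) < ‖z‖ := by
        have := hz.1.2; linarith
      have hDpos : (0:ℝ) < ‖D z‖ := lt_of_lt_of_le (by positivity) hDabs
      have hnum : ‖Complex.I * s z - (z - r)‖ = (4*t) / ‖D z‖ := by
        have he : Complex.I * s z - (z - r) = slitMap r t z - z := by
          show _ = (r:ℂ) + Complex.I * s z - z
          ring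
        rw [he, hkey, norm_div, norm_neg, Complex.norm_real, Real.norm_eq_abs,
          _root_.abs_of_nonneg (by linarith : (0:ℝ) ≤ 4*t)]
      rw [norm_div, hnum, div_div,
        ← div_eq_mul_inv, div_div]
      rw [div_le_div_iff₀ (by positivity) (by positivity)]
      have h1 : ε * (‖z‖)^2 ≤ ‖D z‖ * ‖z‖ := by
        have h2 := mul_le_mul_of_nonneg_right hDabs (le_of_lt habsz)
        nlinarith
      nlinarith [mul_le_mul_of_nonneg_left h1 (show (0:ℝ) ≤ 4*t by linarith)]
    · have hsq : Tendsto (fun z : ℂ => (‖z‖)^2) L atTop :=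
        (tendsto_pow_atTop (by norm_num : 2 ≠ 0)).comp habs
      have := hsq.inv_tendsto_atTop.const_mul (4*t/ε)
      simpa using this
  have hDz : Tendsto (fun z : ℂ => D z / z) L (𝓝 2) := by
    have h1 : Tendsto (fun z : ℂ => (Complex.I * s z - (z - r))/z + 2*((z - r)/z)) L (𝓝 2) := by
      have := hvu0.add (hru.const_mul 2)
      simpa using this
    apply h1.congr
    intro z
    rw [hD, mul_div_assoc', ← add_div]
    congr 1
    ring
  have hzD : Tendsto (fun z : ℂ => z / D z) L (𝓝 2⁻¹) := by
    have h1 := hDz.inv₀ two_ne_zero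
    apply h1.congr
    intro z
    rw [inv_div]
  have hfinal : Tendsto (fun z : ℂ => -((4*t:ℝ):ℂ) * (z / D z)) L (𝓝 (-((4*t:ℝ):ℂ) * 2⁻¹)) :=
    hzD.const_mul _
  have hval : -((4*t:ℝ):ℂ) * 2⁻¹ = -(((2*t:ℝ)):ℂ) := by
    push_cast
    ring
  rw [hval] at hfinal
  apply hfinal.congr'
  filter_upwards [hEv] with z hz
  obtain ⟨hkey, hDabs, hD_ne, hz_ne⟩ := hfacts z hz
  rw [hkey]
  ring

lemma exists_params {z0 w : ℂ} (hz0 : 0 < z0.im) (him : z0.im < w.im) :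
    ∃ r t : ℝ, 0 ≤ t ∧ ((4*t:ℝ):ℂ) - (z0 - r)^2 = -(w - r)^2 := by
  have hne : w.im - z0.im ≠ 0 := by intro h; rw [sub_eq_zero] at h; linarith
  set r : ℝ := (w.re*w.im - z0.re*z0.im)/(w.im - z0.im) with hr
  set t : ℝ := ((z0.re - r)^2 - (w.re - r)^2 + w.im^2 - z0.im^2)/4 with htdef
  have hk : (w.re - r)*w.im = (z0.re - r)*z0.im := by
    rw [hr]
    field_simp
    ring
  have hBA : (w.re - r)^2 * w.im^2 = (z0.re - r)^2 * z0.im^2 := by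
    linear_combination ((w.re - r)*w.im + (z0.re - r)*z0.im) * hk
  have ht : 0 ≤ t := by
    have h4 : ((z0.re - r)^2 - (w.re - r)^2 + w.im^2 - z0.im^2) * w.im^2
        = (w.im^2 - z0.im^2)*((z0.re - r)^2 + w.im^2) := by
      linear_combination -hBA
    have hW2 : 0 < w.im^2 := by nlinarith
    have h5 : 0 ≤ (w.im^2 - z0.im^2)*((z0.re - r)^2 + w.im^2) := by
      apply mul_nonneg
      · nlinarith
      · positivity
    rw [htdef]
    nlinarith [h4, h5, hW2]
  refine ⟨r, t, ht, ?_⟩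
  apply Complex.ext
  · simp only [Complex.sub_re, Complex.neg_re, Complex.ofReal_re, pow_two, Complex.mul_re,
      Complex.sub_im, Complex.ofReal_im]
    rw [htdef]
    ring
  · simp only [Complex.sub_im, Complex.neg_im, Complex.ofReal_re, pow_two, Complex.mul_im,
      Complex.sub_re, Complex.ofReal_im]
    linear_combination (2:ℝ) * hk



lemma id_classH : ClassH id := by
  refine ⟨differentiable_id.differentiableOn, fun a _ b _ h => h, fun z hz => hz, 0, le_refl 0, ?_⟩
  intro ε hε
  have : (fun z : ℂ => z * (id z - z)) = fun _ : ℂ => -((0:ℝ):ℂ) := by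
    funext z; simp
  rw [this]
  exact tendsto_const_nhds

theorem valueRange_ClassH (z0 : ℂ) (hz0 : z0 ∈ UHP) :
    VH z0 = insert z0 {w : ℂ | w ∈ UHP ∧ z0.im < w.im} ∧
    (∀ f : ℂ → ℂ, ClassH f → z0.im ≤ (f z0).im) ∧
    (∀ f : ℂ → ℂ, ClassH f → ((f z0).im = z0.im ↔ EqOn f id UHP)) := by
  have hz0im : 0 < z0.im := hz0
  have part2 : ∀ f : ℂ → ℂ, ClassH f → z0.im ≤ (f z0).im := by
    rintro f ⟨hd, hinj, hm, hh⟩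
    exact im_le_im_classH hd hm hh hz0
  have part3 : ∀ f : ℂ → ℂ, ClassH f → ((f z0).im = z0.im ↔ EqOn f id UHP) := by
    rintro f ⟨hd, hinj, hm, hh⟩
    constructor
    · intro h
      exact rigidity hd hm hh hz0 h
    · intro h
      rw [h hz0]
      rfl
  refine ⟨?_, part2, part3⟩
  ext w
  simp only [VH, mem_setOf_eq, mem_insert_iff]
  constructor
  · rintro ⟨f, hf, rfl⟩
    rcases eq_or_lt_of_le (part2 f hf) with heq | hlt
    · left
      have hEq := (part3 f hf).mp heq.symm
      rw [hEq hz0]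
      rfl
    · right
      exact ⟨hf.2.2.1 hz0, hlt⟩
  · rintro (rfl | ⟨hwU, hwim⟩)
    · exact ⟨id, id_classH, rfl⟩
    · obtain ⟨r, t, ht, hrel⟩ := exists_params hz0im hwim
      exact ⟨slitMap r t, ⟨slitMap_diff ht, slitMap_inj ht, slitMap_mapsTo ht, slitMap_hydro ht⟩,
        slitMap_value hwU.out hrel⟩

end Aux
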